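/- arXiv:1902.08614 — 10 statements merged into one kernel-verified Lean document; each statement's English description precedes it below -/
import Mathlib

section
/- If s and c are differentiable complex-valued functions on a connected open set U containing 0, satisfying s' = c(1+s²), c' = -s(1+c²), s(0)=0, c(0)=1, then s² + s²c² + c² = 1 throughout U. -/
theorem lemniscatic_pythagorean
    (U : Set ℂ) (hU : IsOpen U) (hConn : IsConnected U) (h0 : (0 : ℂ) ∈ U)
    (s c : ℂ → ℂ)
    (hs : ∀ z ∈ U, HasDerivAt s (c z * (1 + s z ^ 2)) z)
    (hc : ∀ z ∈ U, HasDerivAt c (-(s z) * (1 + c z ^ 2)) z)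
    (hs0 : s 0 = 0) (hc0 : c 0 = 1) :
    ∀ z ∈ U, s z ^ 2 + s z ^ 2 * c z ^ 2 + c z ^ 2 = 1 := by
  set F : ℂ → ℂ := fun z => s z ^ 2 + s z ^ 2 * c z ^ 2 + c z ^ 2 with hFdef
  have hF : ∀ z ∈ U, HasDerivAt F 0 z := by
    intro z hz
    have h1 := hs z hz
    have h2 := hc z hz
    have := (((h1.pow 2).add ((h1.pow 2).mul (h2.pow 2))).add (h2.pow 2))
    refine this.congr_deriv ?_
    simp only [Pi.pow_apply]
    push_cast
    ring
  -- F is locally constant: constant on any ball inside U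
  have hball : ∀ z ∈ U, ∀ r > 0, Metric.ball z r ⊆ U →
      ∀ w ∈ Metric.ball z r, F w = F z := by
    intro z hz r hr hsub w hw
    refine (convex_ball z r).is_const_of_fderivWithin_eq_zero
      (fun x hx => ((hF x (hsub hx)).differentiableAt.differentiableWithinAt)) ?_
      hw (Metric.mem_ball_self hr)
    intro x hx
    rw [fderivWithin_eq_fderiv ((Metric.isOpen_ball.uniqueDiffOn) x hx)
      (hF x (hsub hx)).differentiableAt]
    have := (hF x (hsub hx)).hasFDerivAt.fderiv
    rw [this]
    ext
    simp
  have hV : IsOpen {z | z ∈ U ∧ F z = 1} := by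
    rw [isOpen_iff_forall_mem_open]
    rintro z ⟨hz, hFz⟩
    obtain ⟨r, hr, hsub⟩ := Metric.isOpen_iff.mp hU z hz
    exact ⟨Metric.ball z r, fun w hw => ⟨hsub hw, by rw [hball z hz r hr hsub w hw, hFz]⟩,
      Metric.isOpen_ball, Metric.mem_ball_self hr⟩
  have hW : IsOpen {z | z ∈ U ∧ F z ≠ 1} := by
    rw [isOpen_iff_forall_mem_open]
    rintro z ⟨hz, hFz⟩
    obtain ⟨r, hr, hsub⟩ := Metric.isOpen_iff.mp hU z hz
    exact ⟨Metric.ball z r, fun w hw => ⟨hsub hw, by rw [hball z hz r hr hsub w hw]; exact hFz⟩,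
      Metric.isOpen_ball, Metric.mem_ball_self hr⟩
  have hF0 : F 0 = 1 := by simp [hFdef, hs0, hc0]
  have hsubU : U ⊆ {z | z ∈ U ∧ F z = 1} := by
    refine hConn.isPreconnected.subset_left_of_subset_union hV hW ?_ ?_ ?_
    · rw [Set.disjoint_left]; rintro x ⟨_, hx⟩ ⟨_, hx'⟩; exact hx' hx
    · intro z hz
      by_cases h : F z = 1
      · exact Or.inl ⟨hz, h⟩
      · exact Or.inr ⟨hz, h⟩
    · exact ⟨0, h0, h0, hF0⟩
  intro z hz
  exact (hsubU hz).2
end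

section
/- If s and c are differentiable complex-valued functions on a connected open set U containing 0 satisfying s' = c(1+s²), c' = -s(1+c²), s(0)=0, c(0)=1, then (s')² = 1 - s⁴ throughout U. -/
theorem lemniscatic_deriv_sq
    (U : Set ℂ) (hU : IsOpen U) (hConn : IsConnected U) (h0 : (0 : ℂ) ∈ U)
    (s c : ℂ → ℂ)
    (hs : ∀ z ∈ U, HasDerivAt s (c z * (1 + s z ^ 2)) z)
    (hc : ∀ z ∈ U, HasDerivAt c (-(s z) * (1 + c z ^ 2)) z)
    (hs0 : s 0 = 0) (hc0 : c 0 = 1) :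
    ∀ z ∈ U, (deriv s z) ^ 2 = 1 - s z ^ 4 := by
  set F : ℂ → ℂ := fun z => c z ^ 2 * (1 + s z ^ 2) + s z ^ 2 - 1 with hF
  have hF' : ∀ z ∈ U, HasDerivAt F 0 z := by
    intro z hz
    have h1 := hs z hz
    have h2 := hc z hz
    have : HasDerivAt F
        ((2 * c z * (-(s z) * (1 + c z ^ 2))) * (1 + s z ^ 2)
          + c z ^ 2 * (2 * s z * (c z * (1 + s z ^ 2)))
          + 2 * s z * (c z * (1 + s z ^ 2))) z := by
      have := (((h2.pow 2).mul ((hasDerivAt_const z (1:ℂ)).add (h1.pow 2))).add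
        (h1.pow 2)).sub (hasDerivAt_const z (1:ℂ))
      exact this.congr_deriv (by simp only [Pi.add_apply, Pi.pow_apply, Nat.reduceSub]; ring)
    convert this using 1
    ring
  have hdiff : DifferentiableOn ℂ F U := fun z hz =>
    ((hF' z hz).differentiableAt).differentiableWithinAt
  have hF0 : F 0 = 0 := by simp [hF, hs0, hc0]
  -- F vanishes near 0
  obtain ⟨ε, hε, hball⟩ := Metric.isOpen_iff.1 hU 0 h0
  have hball_conv : Convex ℝ (Metric.ball (0:ℂ) ε) := convex_ball 0 ε
  have hzero_ball : ∀ z ∈ Metric.ball (0:ℂ) ε, F z = 0 := by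
    intro z hz
    have : F z = F 0 := by
      apply hball_conv.is_const_of_fderivWithin_eq_zero
        (fun w hw => (hF' w (hball hw)).differentiableAt.differentiableWithinAt)
        (fun w hw => ?_) hz (Metric.mem_ball_self hε)
      rw [fderivWithin_eq_fderiv (Metric.isOpen_ball.uniqueDiffWithinAt hw)
        (hF' w (hball hw)).differentiableAt]
      rw [(hF' w (hball hw)).hasFDerivAt.fderiv]
      ext
      simp
    rw [this, hF0]
  have hanalytic : AnalyticOnNhd ℂ F U := hdiff.analyticOnNhd hU
  have hzeroU : Set.EqOn F 0 U := by
    apply hanalytic.eqOn_zero_of_preconnected_of_eventuallyEq_zero hConn.isPreconnected h0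
    filter_upwards [Metric.ball_mem_nhds 0 hε] with z hz using hzero_ball z hz
  intro z hz
  have hFz : c z ^ 2 * (1 + s z ^ 2) + s z ^ 2 - 1 = 0 := hzeroU hz
  rw [(hs z hz).deriv]
  linear_combination (1 + s z ^ 2) * hFz
end

section
/- If s is a differentiable complex function on a connected open set U containing 0 with s' = (1-s⁴)^(1/2) (principal branch), s(0)=0, and |s| < 1 on U, and c is defined by c = s'/(1+s²), then the pair (s,c) satisfies s' = c(1+s²) and c' = -s(1+c²) with s(0)=0, c(0)=1. -/
theorem lemniscatic_cosine_from_sine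
    (U : Set ℂ) (hU : IsOpen U) (hConn : IsConnected U) (h0 : (0 : ℂ) ∈ U)
    (s c : ℂ → ℂ)
    (hs : ∀ z ∈ U, HasDerivAt s ((1 - s z ^ 4) ^ ((1 : ℂ) / 2)) z)
    (hs0 : s 0 = 0)
    (hbd : ∀ z ∈ U, ‖s z‖ < 1)
    (hc : ∀ z, c z = deriv s z / (1 + s z ^ 2)) :
    (∀ z ∈ U, HasDerivAt s (c z * (1 + s z ^ 2)) z) ∧
    (∀ z ∈ U, HasDerivAt c (-(s z) * (1 + c z ^ 2)) z) ∧
    s 0 = 0 ∧ c 0 = 1 := by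
  -- basic nonvanishing facts
  have hslit : ∀ z ∈ U, (1 - s z ^ 4) ∈ Complex.slitPlane := by
    intro z hz
    left
    have h4 : ‖s z ^ 4‖ < 1 := by
      rw [norm_pow]
      exact pow_lt_one₀ (norm_nonneg _) (hbd z hz) (by norm_num)
    have : (s z ^ 4).re < 1 := lt_of_le_of_lt (Complex.re_le_norm _) h4
    simp [Complex.sub_re]
    linarith
  have hwne : ∀ z ∈ U, (1 - s z ^ 4) ≠ 0 := fun z hz =>
    Complex.slitPlane_ne_zero (hslit z hz)
  have hgne : ∀ z ∈ U, (1 + s z ^ 2) ≠ 0 := by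
    intro z hz h
    have h2 : ‖s z ^ 2‖ < 1 := by
      rw [norm_pow]
      exact pow_lt_one₀ (norm_nonneg _) (hbd z hz) (by norm_num)
    have : s z ^ 2 = -1 := by linear_combination h
    rw [this] at h2; simp at h2
  have hderiv : ∀ z ∈ U, deriv s z = (1 - s z ^ 4) ^ ((1 : ℂ) / 2) := fun z hz =>
    (hs z hz).deriv
  have hcval : ∀ z ∈ U, c z = (1 - s z ^ 4) ^ ((1 : ℂ) / 2) / (1 + s z ^ 2) := by
    intro z hz; rw [hc z, hderiv z hz]
  refine ⟨?_, ?_, hs0, ?_⟩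
  · intro z hz
    have : c z * (1 + s z ^ 2) = (1 - s z ^ 4) ^ ((1 : ℂ) / 2) := by
      rw [hcval z hz, div_mul_cancel₀ _ (hgne z hz)]
    rw [this]; exact hs z hz
  · intro z hz
    have hne : (1 - s z ^ 4) ≠ 0 := hwne z hz
    have key1 : (1 - s z ^ 4) ^ ((1 : ℂ) / 2) * (1 - s z ^ 4) ^ ((1 : ℂ) / 2)
        = 1 - s z ^ 4 := by
      rw [← Complex.cpow_add _ _ hne]; norm_num
    have hAne : (1 - s z ^ 4) ^ ((1 : ℂ) / 2) ≠ 0 := by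
      intro h; rw [h, mul_zero] at key1; exact hne key1.symm
    have key2 : (1 - s z ^ 4) ^ ((1 : ℂ) / 2 - 1)
        = ((1 - s z ^ 4) ^ ((1 : ℂ) / 2))⁻¹ := by
      refine eq_inv_of_mul_eq_one_left ?_
      rw [← Complex.cpow_add _ _ hne]; norm_num
    have hf : HasDerivAt (fun z => (1 - s z ^ 4) ^ ((1 : ℂ) / 2))
        ((1 / 2) * (1 - s z ^ 4) ^ ((1 : ℂ) / 2 - 1) *
          (0 - (4 : ℕ) * s z ^ (4 - 1) * (1 - s z ^ 4) ^ ((1 : ℂ) / 2))) z := by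
      have hinner : HasDerivAt (fun z => 1 - s z ^ 4)
          (0 - (4 : ℕ) * s z ^ (4 - 1) * (1 - s z ^ 4) ^ ((1 : ℂ) / 2)) z :=
        (hasDerivAt_const z (1 : ℂ)).sub ((hs z hz).pow 4)
      exact hinner.cpow_const (hslit z hz)
    have hg : HasDerivAt (fun z => 1 + s z ^ 2)
        (0 + (2 : ℕ) * s z ^ (2 - 1) * (1 - s z ^ 4) ^ ((1 : ℂ) / 2)) z :=
      (hasDerivAt_const z (1 : ℂ)).add ((hs z hz).pow 2)
    have hdiv := hf.div hg (hgne z hz)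
    have heq : (fun z => (1 - s z ^ 4) ^ ((1 : ℂ) / 2) / (1 + s z ^ 2)) =ᶠ[nhds z] c := by
      filter_upwards [hU.mem_nhds hz] with x hx
      exact (hcval x hx).symm
    have hcd := hdiv.congr_of_eventuallyEq heq.symm
    refine hcd.congr_deriv (Eq.symm ?_)
    rw [hcval z hz, key2]
    have hg' : (1 + s z ^ 2) ≠ 0 := hgne z hz
    field_simp
    push_cast
    ring_nf
    ring_nf at key1
    linear_combination ((2 * s z) *
      (1 - s z ^ 4) ^ ((1 : ℂ) / 2)) * key1
  · rw [hc 0, hs0]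
    have : deriv s 0 = (1 - s 0 ^ 4) ^ ((1 : ℂ) / 2) := hderiv 0 h0
    rw [hs0] at this
    simp [this]
end

section
/- If (s,c) and (S,C) are two pairs of differentiable functions on a connected open set U containing 0 both satisfying the system s' = c(1+s²), c' = -s(1+c²) with s(0)=S(0)=0 and c(0)=C(0)=1, then s = S and c = C on U (uniqueness of solutions to the lemniscatic initial value problem). -/
open Set Filter Metric Topology

theorem lemniscatic_uniqueness
    (U : Set ℂ) (hU : IsOpen U) (hConn : IsConnected U) (h0 : (0 : ℂ) ∈ U)
    (s c S C : ℂ → ℂ)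
    (hsA : AnalyticOnNhd ℂ s U) (hcA : AnalyticOnNhd ℂ c U)
    (hSA : AnalyticOnNhd ℂ S U) (hCA : AnalyticOnNhd ℂ C U)
    (hs : ∀ z ∈ U, HasDerivAt s (c z * (1 + s z ^ 2)) z)
    (hc : ∀ z ∈ U, HasDerivAt c (-(s z) * (1 + c z ^ 2)) z)
    (hS : ∀ z ∈ U, HasDerivAt S (C z * (1 + S z ^ 2)) z)
    (hC : ∀ z ∈ U, HasDerivAt C (-(S z) * (1 + C z ^ 2)) z)
    (hs0 : s 0 = 0) (hc0 : c 0 = 1) (hS0 : S 0 = 0) (hC0 : C 0 = 1) :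
    Set.EqOn s S U ∧ Set.EqOn c C U := by
  -- pick a closed ball around 0 inside U
  obtain ⟨ε, hε, hball⟩ : ∃ ε > 0, closedBall (0 : ℂ) ε ⊆ U := by
    rcases Metric.isOpen_iff.1 hU 0 h0 with ⟨r, hr, hrU⟩
    exact ⟨r / 2, by positivity, (closedBall_subset_ball (by linarith)).trans hrU⟩
  -- a bound M on all four functions on the closed ball
  have hKc : IsCompact (closedBall (0 : ℂ) ε) := isCompact_closedBall _ _
  have hcont : ∀ (g : ℂ → ℂ), AnalyticOnNhd ℂ g U → ContinuousOn g (closedBall (0 : ℂ) ε) :=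
    fun g hg => (hg.continuousOn).mono hball
  obtain ⟨M1, hM1⟩ := hKc.exists_bound_of_continuousOn (hcont s hsA)
  obtain ⟨M2, hM2'⟩ := hKc.exists_bound_of_continuousOn (hcont c hcA)
  obtain ⟨M3, hM3⟩ := hKc.exists_bound_of_continuousOn (hcont S hSA)
  obtain ⟨M4, hM4⟩ := hKc.exists_bound_of_continuousOn (hcont C hCA)
  set M : ℝ := max (max M1 M2) (max M3 M4) with hMdef
  have hMs : ∀ z ∈ closedBall (0 : ℂ) ε, ‖s z‖ ≤ M :=
    fun z hz => (hM1 z hz).trans ((le_max_left _ _).trans (le_max_left _ _))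
  have hMc : ∀ z ∈ closedBall (0 : ℂ) ε, ‖c z‖ ≤ M :=
    fun z hz => (hM2' z hz).trans ((le_max_right _ _).trans (le_max_left _ _))
  have hMS : ∀ z ∈ closedBall (0 : ℂ) ε, ‖S z‖ ≤ M :=
    fun z hz => (hM3 z hz).trans ((le_max_left _ _).trans (le_max_right _ _))
  have hMC : ∀ z ∈ closedBall (0 : ℂ) ε, ‖C z‖ ≤ M :=
    fun z hz => (hM4 z hz).trans ((le_max_right _ _).trans (le_max_right _ _))
  have hM0 : 0 ≤ M := le_trans (norm_nonneg _) (hMs 0 (mem_closedBall_self hε.le))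
  set K : ℝ := 1 + 3 * M ^ 2 with hKdef
  -- the difference function along the real axis
  set f : ℝ → ℂ × ℂ := fun t => (s t - S t, c t - C t) with hfdef
  set f' : ℝ → ℂ × ℂ := fun t =>
    (c t * (1 + s t ^ 2) - C t * (1 + S t ^ 2),
     -(s t) * (1 + c t ^ 2) - -(S t) * (1 + C t ^ 2)) with hf'def
  have hmem : ∀ t ∈ Icc (0 : ℝ) ε, (t : ℂ) ∈ closedBall (0 : ℂ) ε := by
    intro t ht
    simp only [mem_closedBall, Complex.dist_eq, sub_zero, Complex.norm_real, Real.norm_eq_abs]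
    rw [abs_of_nonneg ht.1]; exact ht.2
  have hderiv : ∀ t ∈ Icc (0 : ℝ) ε, HasDerivAt f (f' t) t := by
    intro t ht
    have hz := hball (hmem t ht)
    exact HasDerivAt.prodMk (((hs _ hz).sub (hS _ hz)).comp_ofReal) (((hc _ hz).sub (hC _ hz)).comp_ofReal)
  have hcontf : ContinuousOn f (Icc 0 ε) :=
    fun t ht => ((hderiv t ht).continuousAt).continuousWithinAt
  -- Grönwall bound on the derivative
  have hbound : ∀ t ∈ Ico (0 : ℝ) ε, ‖f' t‖ ≤ K * ‖f t‖ + 0 := by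
    intro t ht
    have htIcc : t ∈ Icc (0 : ℝ) ε := ⟨ht.1, ht.2.le⟩
    have hz := hmem t htIcc
    have h1 : ‖s (t : ℂ) - S t‖ ≤ ‖f t‖ := le_max_left _ _
    have h2 : ‖c (t : ℂ) - C t‖ ≤ ‖f t‖ := le_max_right _ _
    have hM2 : ∀ g : ℂ → ℂ, (∀ z ∈ closedBall (0:ℂ) ε, ‖g z‖ ≤ M) → ‖1 + g (t:ℂ) ^ 2‖ ≤ 1 + M ^ 2 := by
      intro g hg
      calc ‖1 + g (t:ℂ) ^ 2‖ ≤ ‖(1:ℂ)‖ + ‖g (t:ℂ) ^ 2‖ := norm_add_le _ _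
        _ ≤ 1 + M ^ 2 := by
            rw [norm_one, norm_pow]
            gcongr
            exact hg _ hz
    have hA : ‖c (t:ℂ) * (1 + s (t:ℂ) ^ 2) - C (t:ℂ) * (1 + S (t:ℂ) ^ 2)‖ ≤ K * ‖f t‖ := by
      have heq : c (t:ℂ) * (1 + s (t:ℂ) ^ 2) - C (t:ℂ) * (1 + S (t:ℂ) ^ 2)
          = (c (t:ℂ) - C (t:ℂ)) * (1 + s (t:ℂ) ^ 2)
            + C (t:ℂ) * ((s (t:ℂ) - S (t:ℂ)) * (s (t:ℂ) + S (t:ℂ))) := by ring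
      rw [heq]
      calc ‖_ + _‖ ≤ ‖(c (t:ℂ) - C (t:ℂ)) * (1 + s (t:ℂ) ^ 2)‖
            + ‖C (t:ℂ) * ((s (t:ℂ) - S (t:ℂ)) * (s (t:ℂ) + S (t:ℂ)))‖ := norm_add_le _ _
        _ ≤ ‖f t‖ * (1 + M ^ 2) + M * (‖f t‖ * (2 * M)) := by
            rw [norm_mul, norm_mul, norm_mul]
            gcongr
            · exact hM2 s hMs
            · exact hMC _ hz
            · calc ‖s (t:ℂ) + S (t:ℂ)‖ ≤ ‖s (t:ℂ)‖ + ‖S (t:ℂ)‖ := norm_add_le _ _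
                _ ≤ M + M := add_le_add (hMs _ hz) (hMS _ hz)
                _ = 2 * M := by ring
        _ ≤ K * ‖f t‖ := by rw [hKdef]; nlinarith [norm_nonneg (f t)]
    have hB : ‖-(s (t:ℂ)) * (1 + c (t:ℂ) ^ 2) - -(S (t:ℂ)) * (1 + C (t:ℂ) ^ 2)‖ ≤ K * ‖f t‖ := by
      have heq : -(s (t:ℂ)) * (1 + c (t:ℂ) ^ 2) - -(S (t:ℂ)) * (1 + C (t:ℂ) ^ 2)
          = -((s (t:ℂ) - S (t:ℂ)) * (1 + c (t:ℂ) ^ 2))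
            - S (t:ℂ) * ((c (t:ℂ) - C (t:ℂ)) * (c (t:ℂ) + C (t:ℂ))) := by ring
      rw [heq]
      calc ‖_ - _‖ ≤ ‖-((s (t:ℂ) - S (t:ℂ)) * (1 + c (t:ℂ) ^ 2))‖
            + ‖S (t:ℂ) * ((c (t:ℂ) - C (t:ℂ)) * (c (t:ℂ) + C (t:ℂ)))‖ := norm_sub_le _ _
        _ ≤ ‖f t‖ * (1 + M ^ 2) + M * (‖f t‖ * (2 * M)) := by
            rw [norm_neg, norm_mul, norm_mul, norm_mul]
            gcongr
            · exact hM2 c hMc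
            · exact hMS _ hz
            · calc ‖c (t:ℂ) + C (t:ℂ)‖ ≤ ‖c (t:ℂ)‖ + ‖C (t:ℂ)‖ := norm_add_le _ _
                _ ≤ M + M := add_le_add (hMc _ hz) (hMC _ hz)
                _ = 2 * M := by ring
        _ ≤ K * ‖f t‖ := by rw [hKdef]; nlinarith [norm_nonneg (f t)]
    rw [add_zero]
    exact max_le hA hB
  have hf0 : ‖f 0‖ ≤ 0 := by
    simp only [hfdef, Complex.ofReal_zero, hs0, hS0, hc0, hC0, sub_self]
    simp [Prod.norm_def]
  -- Grönwall's inequality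
  have hzero : ∀ t ∈ Icc (0 : ℝ) ε, f t = 0 := by
    intro t ht
    have := norm_le_gronwallBound_of_norm_deriv_right_le hcontf
      (fun x hx => (hderiv x ⟨hx.1, hx.2.le⟩).hasDerivWithinAt) hf0 hbound t ht
    rw [gronwallBound_ε0_δ0] at this
    exact norm_le_zero_iff.1 this
  have hsEq : ∀ t ∈ Icc (0 : ℝ) ε, s (t : ℂ) = S (t : ℂ) ∧ c (t : ℂ) = C (t : ℂ) := by
    intro t ht
    have := hzero t ht
    rw [hfdef, Prod.mk_eq_zero, sub_eq_zero, sub_eq_zero] at this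
    exact this
  -- identity theorem: frequently equal near 0
  have htend : Tendsto (fun t : ℝ => (t : ℂ)) (𝓝[>] (0 : ℝ)) (𝓝[≠] (0 : ℂ)) := by
    rw [tendsto_nhdsWithin_iff]
    constructor
    · exact (Complex.continuous_ofReal.tendsto' 0 0 (by simp)).mono_left nhdsWithin_le_nhds
    · filter_upwards [self_mem_nhdsWithin] with t ht
      simp only [mem_compl_iff, mem_singleton_iff, Complex.ofReal_eq_zero]
      exact ne_of_gt ht
  have hfreq : ∀ (g h : ℂ → ℂ), (∀ t ∈ Icc (0 : ℝ) ε, g (t : ℂ) = h (t : ℂ)) →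
      ∃ᶠ z in 𝓝[≠] (0 : ℂ), g z = h z := by
    intro g h hgh
    apply htend.frequently
    apply Eventually.frequently
    filter_upwards [Ioo_mem_nhdsGT_of_mem (left_mem_Ico.2 hε)] with t ht
    exact hgh t ⟨ht.1.le, ht.2.le⟩
  constructor
  · exact hsA.eqOn_of_preconnected_of_frequently_eq hSA hConn.isPreconnected h0
      (hfreq s S fun t ht => (hsEq t ht).1)
  · exact hcA.eqOn_of_preconnected_of_frequently_eq hCA hConn.isPreconnected h0
      (hfreq c C fun t ht => (hsEq t ht).2)
end

section
/- If s and c are analytic on a disc B_r(0) ⊆ ℂ solving s' = c(1+s²), c' = -s(1+c²), s(0)=0, c(0)=1, with the solution unique, and c is nonvanishing on B_r(0), then s(iz) = i·s(z) and c(iz) = 1/c(z) for all z ∈ B_r(0). -/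
open Complex Metric

theorem lemniscatic_imaginary_transformation
    (r : ℝ) (hr : 0 < r) (s c : ℂ → ℂ)
    (hsA : AnalyticOnNhd ℂ s (Metric.ball (0 : ℂ) r))
    (hcA : AnalyticOnNhd ℂ c (Metric.ball (0 : ℂ) r))
    (hs : ∀ z ∈ Metric.ball (0 : ℂ) r, HasDerivAt s (c z * (1 + s z ^ 2)) z)
    (hc : ∀ z ∈ Metric.ball (0 : ℂ) r, HasDerivAt c (-(s z) * (1 + c z ^ 2)) z)
    (hs0 : s 0 = 0) (hc0 : c 0 = 1)
    (hcnz : ∀ z ∈ Metric.ball (0 : ℂ) r, c z ≠ 0)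
    (huniq : ∀ S C : ℂ → ℂ,
      AnalyticOnNhd ℂ S (Metric.ball (0 : ℂ) r) →
      AnalyticOnNhd ℂ C (Metric.ball (0 : ℂ) r) →
      (∀ z ∈ Metric.ball (0 : ℂ) r, HasDerivAt S (C z * (1 + S z ^ 2)) z) →
      (∀ z ∈ Metric.ball (0 : ℂ) r, HasDerivAt C (-(S z) * (1 + C z ^ 2)) z) →
      S 0 = 0 → C 0 = 1 →
      Set.EqOn S s (Metric.ball (0 : ℂ) r) ∧ Set.EqOn C c (Metric.ball (0 : ℂ) r)) :
    ∀ z ∈ Metric.ball (0 : ℂ) r, s (Complex.I * z) = Complex.I * s z ∧ c (Complex.I * z) = (c z)⁻¹ := by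
  have h0 : (0 : ℂ) ∈ Metric.ball (0 : ℂ) r := by simpa using hr
  -- membership of I * z
  have hmem : ∀ z ∈ Metric.ball (0 : ℂ) r, Complex.I * z ∈ Metric.ball (0 : ℂ) r := by
    intro z hz
    simpa [Metric.mem_ball, Complex.norm_def, map_mul] using hz
  -- the identity s^2 + c^2 + s^2*c^2 = 1 on the ball
  set F : ℂ → ℂ := fun z => s z ^ 2 + c z ^ 2 + s z ^ 2 * c z ^ 2 with hF
  have hFd : ∀ z ∈ Metric.ball (0 : ℂ) r, HasDerivAt F 0 z := by
    intro z hz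
    have h1 := ((hs z hz).pow 2).add ((hc z hz).pow 2) |>.add
      (((hs z hz).pow 2).mul ((hc z hz).pow 2))
    refine h1.congr_deriv (Eq.symm ?_)
    simp only [Pi.pow_apply]
    ring
  have hident : ∀ z ∈ Metric.ball (0 : ℂ) r, F z = 1 := by
    intro z hz
    have hconv : Convex ℝ (Metric.ball (0 : ℂ) r) := convex_ball 0 r
    have hdiff : DifferentiableOn ℂ F (Metric.ball (0 : ℂ) r) := fun x hx =>
      ((hFd x hx).differentiableAt).differentiableWithinAt
    have hzero : ∀ x ∈ Metric.ball (0 : ℂ) r,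
        fderivWithin ℂ F (Metric.ball (0 : ℂ) r) x = 0 := by
      intro x hx
      rw [fderivWithin_of_isOpen isOpen_ball hx, (hFd x hx).hasFDerivAt.fderiv]
      ext
      simp
    have := hconv.is_const_of_fderivWithin_eq_zero hdiff hzero hz h0
    rw [this]
    simp [hF, hs0, hc0]
  -- define S, C
  set S : ℂ → ℂ := fun z => -Complex.I * s (Complex.I * z) with hS
  set C : ℂ → ℂ := fun z => (c (Complex.I * z))⁻¹ with hC
  have hIz : ∀ z : ℂ, HasDerivAt (fun w : ℂ => Complex.I * w) Complex.I z := by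
    intro z
    simpa using (hasDerivAt_id z).const_mul Complex.I
  have hSd : ∀ z ∈ Metric.ball (0 : ℂ) r, HasDerivAt S (C z * (1 + S z ^ 2)) z := by
    intro z hz
    have hz' := hmem z hz
    have h1 : HasDerivAt (fun w => s (Complex.I * w))
        (c (Complex.I * z) * (1 + s (Complex.I * z) ^ 2) * Complex.I) z :=
      (hs _ hz').comp z (hIz z)
    have h2 := h1.const_mul (-Complex.I)
    refine h2.congr_deriv (Eq.symm ?_)
    have hid' : s (Complex.I * z) ^ 2 + c (Complex.I * z) ^ 2
        + s (Complex.I * z) ^ 2 * c (Complex.I * z) ^ 2 = 1 := hident _ hz'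
    have hcz := hcnz _ hz'
    have e1 : 1 + (-Complex.I * s (Complex.I * z)) ^ 2 =
        c (Complex.I * z) ^ 2 * (1 + s (Complex.I * z) ^ 2) := by
      linear_combination (-1 : ℂ) * hid' + s (Complex.I * z) ^ 2 * Complex.I_sq
    have e2 : C z * (1 + S z ^ 2) = c (Complex.I * z) * (1 + s (Complex.I * z) ^ 2) := by
      simp only [hS, hC]
      rw [e1]
      field_simp
    rw [e2]
    linear_combination (c (Complex.I * z) * (1 + s (Complex.I * z) ^ 2)) * Complex.I_sq
  have hCd : ∀ z ∈ Metric.ball (0 : ℂ) r, HasDerivAt C (-(S z) * (1 + C z ^ 2)) z := by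
    intro z hz
    have hz' := hmem z hz
    have hcz := hcnz _ hz'
    have h1 : HasDerivAt (fun w => c (Complex.I * w))
        (-(s (Complex.I * z)) * (1 + c (Complex.I * z) ^ 2) * Complex.I) z :=
      (hc _ hz').comp z (hIz z)
    have h2 := h1.inv hcz
    refine h2.congr_deriv (Eq.symm ?_)
    simp only [hS, hC]
    field_simp
    ring
  have hSA : AnalyticOnNhd ℂ S (Metric.ball (0 : ℂ) r) := by
    intro z hz
    exact (analyticAt_const.mul ((hsA _ (hmem z hz)).comp
      (analyticAt_const.mul (analyticAt_id)) ))
  have hCA : AnalyticOnNhd ℂ C (Metric.ball (0 : ℂ) r) := by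
    intro z hz
    exact ((hcA _ (hmem z hz)).comp (analyticAt_const.mul analyticAt_id)).inv
      (hcnz _ (hmem z hz))
  have hS0 : S 0 = 0 := by simp [hS, hs0]
  have hC0 : C 0 = 1 := by simp [hC, hc0]
  obtain ⟨hSeq, hCeq⟩ := huniq S C hSA hCA hSd hCd hS0 hC0
  intro z hz
  constructor
  · have := hSeq hz
    simp only [hS] at this
    have := congrArg (Complex.I * ·) this
    rw [← this]
    rw [show Complex.I * (-Complex.I * s (Complex.I * z)) = s (Complex.I * z) by
      rw [← mul_assoc, mul_neg, Complex.I_mul_I]; ring]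
  · have := hCeq hz
    simp only [hC] at this
    rw [← this, inv_inv]
end

section
/- Let s be analytic on B_r(0) with s(0)=0, |s| < 1 on B_r(0), and s'(z) = (1-s(z)⁴)^(1/2) (principal branch). Then for every z ∈ B_r(0), z equals the integral from 0 to s(z) (along the segment [0, s(z)]) of dσ/(1-σ⁴)^(1/2). -/
open Complex Metric Set MeasureTheory intervalIntegral

noncomputable def lemF (σ : ℂ) : ℂ := ((1 - σ ^ 4) ^ ((1 : ℂ) / 2))⁻¹

noncomputable def lemF' (σ : ℂ) : ℂ :=
  -(((1 : ℂ) / 2) * (1 - σ ^ 4) ^ ((1 : ℂ) / 2 - 1) * (-(4 * σ ^ 3))) /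
    ((1 - σ ^ 4) ^ ((1 : ℂ) / 2)) ^ 2

lemma lem_slit {σ : ℂ} (h : ‖σ‖ < 1) : 1 - σ ^ 4 ∈ Complex.slitPlane := by
  have h1 : ‖σ ^ 4‖ < 1 := by
    rw [norm_pow]
    exact pow_lt_one₀ (norm_nonneg σ) h (by norm_num)
  have h2 : (σ ^ 4).re ≤ ‖σ ^ 4‖ := Complex.re_le_norm _
  rw [Complex.mem_slitPlane_iff]
  left
  simp only [Complex.sub_re, Complex.one_re]
  linarith

lemma lem_base_ne {σ : ℂ} (h : ‖σ‖ < 1) : 1 - σ ^ 4 ≠ 0 :=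
  Complex.slitPlane_ne_zero (lem_slit h)

lemma lem_q_ne {σ : ℂ} (h : ‖σ‖ < 1) : (1 - σ ^ 4) ^ ((1 : ℂ) / 2) ≠ 0 := by
  intro h0
  exact lem_base_ne h ((Complex.cpow_eq_zero_iff _ _).1 h0).1

lemma lem_hq {σ : ℂ} (h : ‖σ‖ < 1) :
    HasDerivAt (fun σ : ℂ => (1 - σ ^ 4) ^ ((1 : ℂ) / 2))
      (((1 : ℂ) / 2) * (1 - σ ^ 4) ^ ((1 : ℂ) / 2 - 1) * (-(4 * σ ^ 3))) σ := by
  have h1 : HasDerivAt (fun σ : ℂ => 1 - σ ^ 4) (-(4 * σ ^ 3)) σ := by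
    simpa using (hasDerivAt_pow 4 σ).const_sub 1
  exact h1.cpow_const (lem_slit h)

lemma lem_hf (σ : ℂ) (h : ‖σ‖ < 1) : HasDerivAt lemF (lemF' σ) σ := by
  unfold lemF lemF'
  exact (lem_hq h).inv (lem_q_ne h)

lemma lem_hf_comp_left (c : ℂ) {x : ℂ} (h : ‖c * x‖ < 1) :
    HasDerivAt (fun u : ℂ => lemF (c * u)) (lemF' (c * x) * c) x := by
  have h1 : HasDerivAt (fun u : ℂ => c * u) c x := by
    simpa using (hasDerivAt_id x).const_mul c
  have h2 := HasDerivAt.comp x (lem_hf (c * x) h) h1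
  exact h2

lemma lem_hf_comp_right (c : ℂ) {x : ℂ} (h : ‖x * c‖ < 1) :
    HasDerivAt (fun u : ℂ => lemF (u * c)) (lemF' (x * c) * c) x := by
  have h1 : HasDerivAt (fun u : ℂ => u * c) c x := by
    simpa using (hasDerivAt_id x).mul_const c
  have h2 := HasDerivAt.comp x (lem_hf (x * c) h) h1
  exact h2

lemma lem_contF : ContinuousOn lemF (ball (0 : ℂ) 1) := fun w hw =>
  ((lem_hf w (by simpa using mem_ball_zero_iff.1 hw)).differentiableAt.continuousAt).continuousWithinAt

lemma lem_contF' : ContinuousOn lemF' (ball (0 : ℂ) 1) := by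
  have hdiff : DifferentiableOn ℂ lemF (ball (0 : ℂ) 1) := fun w hw =>
    (lem_hf w (by simpa using mem_ball_zero_iff.1 hw)).differentiableAt.differentiableWithinAt
  have hA : AnalyticOnNhd ℂ lemF (ball (0 : ℂ) 1) := hdiff.analyticOnNhd isOpen_ball
  refine (hA.deriv.continuousOn).congr ?_
  intro w hw
  exact ((lem_hf w (by simpa using mem_ball_zero_iff.1 hw)).deriv).symm

lemma primitive_deriv {w₀ : ℂ} (h : ‖w₀‖ < 1) :
    HasDerivAt (fun w : ℂ => ∫ t in (0 : ℝ)..1, w / ((1 - ((t : ℂ) * w) ^ 4) ^ ((1 : ℂ) / 2)))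
      (lemF w₀) w₀ := by
  set ρ : ℝ := (1 + ‖w₀‖) / 2 with hρ
  have hρ1 : ρ < 1 := by simp only [hρ]; linarith
  have hρ0 : 0 < ρ := by positivity
  have hw₀ρ : ‖w₀‖ < ρ := by simp only [hρ]; linarith
  set ε : ℝ := (1 - ‖w₀‖) / 2 with hε
  have hε0 : 0 < ε := by simp only [hε]; linarith
  have hball : ∀ w ∈ ball w₀ ε, ‖w‖ < ρ := by
    intro w hw
    have : ‖w - w₀‖ < ε := by simpa [dist_eq, Complex.dist_eq] using mem_ball.1 hw
    calc ‖w‖ = ‖w - w₀ + w₀‖ := by ring_nf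
      _ ≤ ‖w - w₀‖ + ‖w₀‖ := norm_add_le _ _
      _ < ε + ‖w₀‖ := by linarith
      _ = ρ := by simp only [hε, hρ]; ring
  have htw : ∀ (t : ℝ), t ∈ Set.Icc (0:ℝ) 1 → ∀ (w : ℂ), ‖w‖ < ρ →
      ‖(t : ℂ) * w‖ ≤ ‖w‖ := by
    intro t ht w _
    rw [norm_mul, Complex.norm_real, Real.norm_eq_abs, _root_.abs_of_nonneg ht.1]
    nlinarith [norm_nonneg w, ht.2]
  -- continuity bounds on closed ball
  obtain ⟨C₁, hC₁⟩ := (isCompact_closedBall (0:ℂ) ρ).exists_bound_of_continuousOn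
    (lem_contF.mono (closedBall_subset_ball hρ1))
  obtain ⟨C₂, hC₂⟩ := (isCompact_closedBall (0:ℂ) ρ).exists_bound_of_continuousOn
    (lem_contF'.mono (closedBall_subset_ball hρ1))
  have hC₂0 : 0 ≤ C₂ := le_trans (norm_nonneg _) (hC₂ 0 (mem_closedBall_self hρ0.le))
  set F' : ℂ → ℝ → ℂ := fun w t => lemF ((t : ℂ) * w) + w * (lemF' ((t : ℂ) * w) * (t : ℂ))
    with hF'def
  have key := intervalIntegral.hasDerivAt_integral_of_dominated_loc_of_deriv_le
    (F := fun w : ℂ => fun t : ℝ => w / ((1 - ((t : ℂ) * w) ^ 4) ^ ((1 : ℂ) / 2)))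
    (F' := F') (x₀ := w₀) (a := 0) (b := 1) (μ := volume) (bound := fun _ => C₁ + C₂) (ball_mem_nhds w₀ hε0)
    ?_ ?_ ?_ ?_ ?_ ?_
  · obtain ⟨hInt, hDer⟩ := key
    -- compute the derivative integral via FTC
    have hFTC : ∀ t ∈ Set.uIcc (0:ℝ) 1,
        HasDerivAt (fun t : ℝ => (t : ℂ) * lemF ((t : ℂ) * w₀)) (F' w₀ t) t := by
      intro t ht
      rw [Set.uIcc_of_le (by norm_num)] at ht
      have habs : ‖(t : ℂ) * w₀‖ < 1 :=
        lt_of_le_of_lt (htw t ht w₀ hw₀ρ) h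
      have hcomp : HasDerivAt (fun u : ℂ => lemF (u * w₀))
          (lemF' ((t : ℂ) * w₀) * w₀) (t : ℂ) := lem_hf_comp_right w₀ habs
      have hE : HasDerivAt (fun u : ℂ => u * lemF (u * w₀))
          (1 * lemF ((t : ℂ) * w₀) + (t : ℂ) * (lemF' ((t : ℂ) * w₀) * w₀)) (t : ℂ) :=
        (hasDerivAt_id _).mul hcomp
      have := hE.comp_ofReal
      convert this using 1
      simp only [hF'def]
      ring
    have hval : (∫ t in (0:ℝ)..1, F' w₀ t) = lemF w₀ := by
      rw [intervalIntegral.integral_eq_sub_of_hasDerivAt hFTC hInt]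
      simp
    rwa [hval] at hDer
  · -- hF_meas
    filter_upwards [ball_mem_nhds w₀ hε0] with w hw
    apply ContinuousOn.aestronglyMeasurable _ measurableSet_uIoc
    intro t ht
    rw [Set.uIoc_of_le (by norm_num : (0:ℝ) ≤ 1)] at ht
    have habs : ‖(t : ℂ) * w‖ < 1 :=
      lt_of_le_of_lt (htw t ⟨ht.1.le, ht.2⟩ w (hball w hw)) (lt_trans (hball w hw) hρ1)
    apply ContinuousWithinAt.div continuousWithinAt_const
    · apply ContinuousAt.continuousWithinAt
      have hc : ContinuousAt (fun t : ℝ => (1 - ((t : ℂ) * w) ^ 4)) t := by fun_prop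
      exact hc.cpow continuousAt_const (lem_slit habs)
    · exact lem_q_ne habs
  · -- hF_int
    apply ContinuousOn.intervalIntegrable
    intro t ht
    rw [Set.uIcc_of_le (by norm_num : (0:ℝ) ≤ 1)] at ht
    have habs : ‖(t : ℂ) * w₀‖ < 1 := lt_of_le_of_lt (htw t ht w₀ hw₀ρ) h
    apply ContinuousWithinAt.div continuousWithinAt_const
    · apply ContinuousAt.continuousWithinAt
      have hc : ContinuousAt (fun t : ℝ => (1 - ((t : ℂ) * w₀) ^ 4)) t := by fun_prop
      exact hc.cpow continuousAt_const (lem_slit habs)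
    · exact lem_q_ne habs
  · -- hF'_meas
    apply ContinuousOn.aestronglyMeasurable _ measurableSet_uIoc
    intro t ht
    rw [Set.uIoc_of_le (by norm_num : (0:ℝ) ≤ 1)] at ht
    have habs : ‖(t : ℂ) * w₀‖ < 1 :=
      lt_of_le_of_lt (htw t ⟨ht.1.le, ht.2⟩ w₀ hw₀ρ) h
    have hmem : ((t : ℂ) * w₀) ∈ ball (0:ℂ) 1 := by
      simpa [mem_ball_zero_iff] using habs
    have hc : ContinuousAt (fun t : ℝ => (t : ℂ) * w₀) t := by fun_prop
    apply ContinuousAt.continuousWithinAt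
    have hc1 : ContinuousAt (lemF ∘ fun t : ℝ => (t : ℂ) * w₀) t :=
      ContinuousAt.comp (lem_contF.continuousAt (isOpen_ball.mem_nhds hmem)) hc
    have hc2 : ContinuousAt (lemF' ∘ fun t : ℝ => (t : ℂ) * w₀) t :=
      ContinuousAt.comp (lem_contF'.continuousAt (isOpen_ball.mem_nhds hmem)) hc
    exact hc1.add (continuousAt_const.mul (hc2.mul (by fun_prop)))
  · -- h_bound
    apply Filter.Eventually.of_forall
    intro t ht w hw
    rw [Set.uIoc_of_le (by norm_num : (0:ℝ) ≤ 1)] at ht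
    have hwρ := hball w hw
    have habs' : ‖(t : ℂ) * w‖ ≤ ρ := le_trans (htw t ⟨ht.1.le, ht.2⟩ w hwρ) hwρ.le
    have hmem : ((t : ℂ) * w) ∈ closedBall (0:ℂ) ρ := by
      simpa [mem_closedBall_zero_iff] using habs'
    have h1 := hC₁ _ hmem
    have h2 := hC₂ _ hmem
    have ht1 : |t| ≤ 1 := by rw [abs_of_pos ht.1]; exact ht.2
    have hw1 : ‖w‖ ≤ 1 := by linarith
    calc ‖F' w t‖ ≤ ‖lemF ((t : ℂ) * w)‖ + ‖w * (lemF' ((t : ℂ) * w) * (t : ℂ))‖ :=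
          norm_add_le _ _
      _ = ‖lemF ((t : ℂ) * w)‖ + ‖w‖ * (‖lemF' ((t : ℂ) * w)‖ * |t|) := by
          simp [norm_mul, Complex.norm_real]
      _ ≤ C₁ + C₂ := by
          have hn2 : ‖w‖ * (‖lemF' ((t : ℂ) * w)‖ * |t|) ≤ C₂ := by
            have e1 : ‖lemF' ((t : ℂ) * w)‖ * |t| ≤ C₂ * 1 :=
              mul_le_mul h2 ht1 (abs_nonneg t) hC₂0
            have e2 : ‖w‖ * (‖lemF' ((t : ℂ) * w)‖ * |t|) ≤ 1 * (C₂ * 1) :=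
              mul_le_mul hw1 e1 (by positivity) (by norm_num)
            linarith
          linarith
  · exact intervalIntegrable_const
  · -- h_diff
    apply Filter.Eventually.of_forall
    intro t ht w hw
    rw [Set.uIoc_of_le (by norm_num : (0:ℝ) ≤ 1)] at ht
    have habs : ‖(t : ℂ) * w‖ < 1 :=
      lt_of_le_of_lt (htw t ⟨ht.1.le, ht.2⟩ w (hball w hw)) (lt_trans (hball w hw) hρ1)
    have hcomp : HasDerivAt (fun w : ℂ => lemF ((t : ℂ) * w))
        (lemF' ((t : ℂ) * w) * (t : ℂ)) w := lem_hf_comp_left (t : ℂ) habs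
    have h2 : HasDerivAt (fun w : ℂ => w * lemF ((t : ℂ) * w))
        (1 * lemF ((t : ℂ) * w) + w * (lemF' ((t : ℂ) * w) * (t : ℂ))) w :=
      (hasDerivAt_id _).mul hcomp
    have heq : (fun w : ℂ => w / ((1 - ((t : ℂ) * w) ^ 4) ^ ((1 : ℂ) / 2)))
        = fun w : ℂ => w * lemF ((t : ℂ) * w) := by
      funext w; rw [div_eq_mul_inv]; rfl
    rw [heq, hF'def]
    simpa using h2

theorem lemniscatic_integral_formula
    (s : ℂ → ℂ)
    (hsA : AnalyticOnNhd ℂ s (Metric.ball (0 : ℂ) ((2 : ℝ) ^ (-(1 : ℝ) / 2))))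
    (hs0 : s 0 = 0)
    (hbd : ∀ z ∈ Metric.ball (0 : ℂ) ((2 : ℝ) ^ (-(1 : ℝ) / 2)), ‖s z‖ < 1)
    (hs : ∀ z ∈ Metric.ball (0 : ℂ) ((2 : ℝ) ^ (-(1 : ℝ) / 2)),
      HasDerivAt s ((1 - s z ^ 4) ^ ((1 : ℂ) / 2)) z) :
    ∀ z ∈ Metric.ball (0 : ℂ) ((2 : ℝ) ^ (-(1 : ℝ) / 2)),
      z = ∫ t in (0 : ℝ)..1, s z / ((1 - ((t : ℂ) * s z) ^ 4) ^ ((1 : ℂ) / 2)) := by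
  intro z hz
  set r : ℝ := (2 : ℝ) ^ (-(1 : ℝ) / 2) with hr
  set g : ℂ → ℂ := fun w => ∫ t in (0 : ℝ)..1, w / ((1 - ((t : ℂ) * w) ^ 4) ^ ((1 : ℂ) / 2))
    with hg
  have hkey : ∀ u₀ : ℂ, ‖u₀‖ ≤ 1 → HasDerivAt (fun u : ℂ => g (s (u * z))) z u₀ := by
    intro u₀ hu₀
    have hyb : u₀ * z ∈ Metric.ball (0 : ℂ) r := by
      rw [mem_ball_zero_iff] at hz ⊢
      rw [norm_mul]
      have hn : ‖u₀‖ ≤ 1 := by exact hu₀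
      nlinarith [norm_nonneg z, norm_nonneg u₀]
    have h1 : HasDerivAt s ((1 - s (u₀ * z) ^ 4) ^ ((1 : ℂ) / 2)) (u₀ * z) := hs _ hyb
    have h2 : HasDerivAt g (lemF (s (u₀ * z))) (s (u₀ * z)) := primitive_deriv (hbd _ hyb)
    have h3 := HasDerivAt.comp (u₀ * z) h2 h1
    have h4 : lemF (s (u₀ * z)) * ((1 - s (u₀ * z) ^ 4) ^ ((1 : ℂ) / 2)) = 1 := by
      unfold lemF
      exact inv_mul_cancel₀ (lem_q_ne (hbd _ hyb))
    have hinner : HasDerivAt (fun u : ℂ => u * z) z u₀ := by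
      simpa using (hasDerivAt_id u₀).mul_const z
    have h5 := HasDerivAt.comp u₀ h3 hinner
    rw [h4, one_mul] at h5
    exact h5
  have hψ : ∀ τ ∈ Set.uIcc (0:ℝ) 1,
      HasDerivAt (fun τ : ℝ => g (s ((τ : ℂ) * z))) z τ := by
    intro τ hτ
    rw [Set.uIcc_of_le (by norm_num)] at hτ
    have h6 : ‖(τ : ℂ)‖ ≤ 1 := by
      rw [Complex.norm_real, Real.norm_eq_abs, _root_.abs_of_nonneg hτ.1]
      exact hτ.2
    exact (hkey _ h6).comp_ofReal
  have hint : IntervalIntegrable (fun _ : ℝ => z) volume 0 1 := intervalIntegrable_const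
  have := intervalIntegral.integral_eq_sub_of_hasDerivAt hψ hint
  simp only [intervalIntegral.integral_const, sub_zero, one_smul, Complex.ofReal_one,
    Complex.ofReal_zero, one_mul, zero_mul, hs0] at this
  have hg0 : g 0 = 0 := by
    simp only [hg]
    simp
  rw [hg0, sub_zero, hg] at this
  simpa using this
end

section
/- The quartic q(σ) = (σ+1)⁴ + 16σ(σ-1)² has exactly one root in the open unit disc of ℂ, namely the real number 2√(14 + 10√2) - 5 - 4√2. -/
private lemma real_of_root (c : ℝ) (σ : ℂ)
    (h : σ ^ 2 + (c : ℂ) * σ + 1 = 0) (hlt : ‖σ‖ < 1) :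
    σ = ((σ.re : ℝ) : ℂ) := by
  by_contra hne
  have hconj : (starRingEnd ℂ) σ ≠ σ :=
    fun h' => hne (Complex.conj_eq_iff_re.mp h').symm
  have hc : ((starRingEnd ℂ) σ) ^ 2 + (c : ℂ) * ((starRingEnd ℂ) σ) + 1 = 0 := by
    have := congrArg (starRingEnd ℂ) h
    simpa using this
  have hfac : (σ - (starRingEnd ℂ) σ) * (σ + (starRingEnd ℂ) σ + c) = 0 := by
    linear_combination h - hc
  have hsum : σ + (starRingEnd ℂ) σ + c = 0 := by
    rcases mul_eq_zero.mp hfac with h' | h'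
    · exact absurd (sub_eq_zero.mp h').symm hconj
    · exact h'
  have hmul : σ * (starRingEnd ℂ) σ = 1 := by linear_combination σ * hsum - h
  have h1 : Complex.normSq σ = 1 := by
    have : (Complex.normSq σ : ℂ) = 1 := by rw [← Complex.mul_conj]; exact hmul
    exact_mod_cast this
  have h2 : ‖σ‖ ^ 2 = 1 := by rw [Complex.sq_norm]; exact h1
  nlinarith [norm_nonneg σ]

theorem quartic_unique_root_in_disc (σ : ℂ) :
    (‖σ‖ < 1 ∧ (σ + 1) ^ 4 + 16 * σ * (σ - 1) ^ 2 = 0) ↔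
      σ = ((2 * Real.sqrt (14 + 10 * Real.sqrt 2) - 5 - 4 * Real.sqrt 2 : ℝ) : ℂ) := by
  set a := Real.sqrt 2 with ha
  have ha0 : 0 ≤ a := Real.sqrt_nonneg _
  have ha2 : a ^ 2 = 2 := Real.sq_sqrt (by norm_num)
  set s := Real.sqrt (14 + 10 * a) with hs
  have hs0 : 0 ≤ s := Real.sqrt_nonneg _
  have hs2 : s ^ 2 = 14 + 10 * a := Real.sq_sqrt (by positivity)
  set r : ℝ := 2 * s - 5 - 4 * a with hr
  have ha14 : (1.4 : ℝ) < a := by nlinarith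
  have hrroot : r ^ 2 + (10 + 8 * a) * r + 1 = 0 := by
    rw [hr]; linear_combination 4 * hs2 - 16 * ha2
  have hr1 : r < 1 := by nlinarith
  have hr2 : -1 < r := by nlinarith
  have hA2 : ((a : ℂ)) ^ 2 = 2 := by exact_mod_cast ha2
  constructor
  · rintro ⟨hlt, heq⟩
    have hfac : (σ ^ 2 + (10 - 8 * (a : ℂ)) * σ + 1) *
        (σ ^ 2 + (10 + 8 * (a : ℂ)) * σ + 1) = 0 := by
      linear_combination heq - 64 * σ ^ 2 * hA2
    rcases mul_eq_zero.mp hfac with h1 | h2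
    · exfalso
      have h1' : σ ^ 2 + (((10 - 8 * a : ℝ)) : ℂ) * σ + 1 = 0 := by
        push_cast; linear_combination h1
      have hreal := real_of_root _ _ h1' hlt
      set x := σ.re with hx
      rw [hreal] at h1'
      have hxr : x ^ 2 + (10 - 8 * a) * x + 1 = 0 := by exact_mod_cast h1'
      nlinarith [sq_nonneg (x + 5 - 4 * a)]
    · have h2' : σ ^ 2 + (((10 + 8 * a : ℝ)) : ℂ) * σ + 1 = 0 := by
        push_cast; linear_combination h2
      have hreal := real_of_root _ _ h2' hlt
      set x := σ.re with hx
      rw [hreal] at h2' hlt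
      rw [Complex.norm_real, Real.norm_eq_abs] at hlt
      have hxr : x ^ 2 + (10 + 8 * a) * x + 1 = 0 := by exact_mod_cast h2'
      have hfac2 : (x - r) * (x + r + (10 + 8 * a)) = 0 := by
        linear_combination hxr - hrroot
      have hx2 : x = r := by
        rcases mul_eq_zero.mp hfac2 with h' | h'
        · linarith [sub_eq_zero.mp h']
        · exfalso
          have hxlt : -1 < x := (abs_lt.mp hlt).1
          rw [hr] at h'
          linarith
      rw [hreal, hx2]
  · rintro rfl
    constructor
    · rw [Complex.norm_real, Real.norm_eq_abs]
      exact abs_lt.mpr ⟨hr2, hr1⟩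
    · have hrootC : ((r : ℂ)) ^ 2 + (10 + 8 * (a : ℂ)) * (r : ℂ) + 1 = 0 := by
        exact_mod_cast hrroot
      linear_combination (((r : ℂ)) ^ 2 + (10 - 8 * (a : ℂ)) * (r : ℂ) + 1) * hrootC
        + 64 * ((r : ℂ)) ^ 2 * hA2
end

section
/- Let f be a real function on an interval containing [0, √2) with f(0) = 0 and f'(t) = (1+f(t)⁴)^(1/2) for all t. Then there exists a unique K ∈ (0,1) with f(K) = 1. -/
theorem exists_unique_K
    (I : Set ℝ) (hI : IsOpen I) (hIconn : IsConnected I)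
    (hIsub : Set.Ico (0 : ℝ) (Real.sqrt 2) ⊆ I)
    (f : ℝ → ℝ) (hf0 : f 0 = 0)
    (hf : ∀ t ∈ I, HasDerivAt f (Real.sqrt (1 + f t ^ 4)) t) :
    ∃! K : ℝ, K ∈ Set.Ioo (0 : ℝ) 1 ∧ f K = 1 := by
  have h2 : (1:ℝ) < Real.sqrt 2 := by
    rw [show (1:ℝ) = Real.sqrt 1 from (Real.sqrt_one).symm]
    exact Real.sqrt_lt_sqrt (by norm_num) (by norm_num)
  have hsub : Set.Icc (0:ℝ) 1 ⊆ I := fun x hx => hIsub ⟨hx.1, lt_of_le_of_lt hx.2 h2⟩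
  have hpos : ∀ t, 0 < Real.sqrt (1 + f t ^ 4) := fun t =>
    Real.sqrt_pos.mpr (by positivity)
  have hcont : ContinuousOn f (Set.Icc (0:ℝ) 1) := fun x hx =>
    ((hf x (hsub hx)).continuousAt).continuousWithinAt
  have hderiv : ∀ x ∈ I, deriv f x = Real.sqrt (1 + f x ^ 4) := fun x hx =>
    (hf x hx).deriv
  have hmono : StrictMonoOn f (Set.Icc (0:ℝ) 1) := by
    apply strictMonoOn_of_deriv_pos (convex_Icc 0 1) hcont
    intro x hx
    rw [interior_Icc] at hx
    rw [hderiv x (hsub ⟨hx.1.le, hx.2.le⟩)]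
    exact hpos x
  have hg : ∀ t ∈ Set.Icc (0:ℝ) 1, t ≤ f t := by
    have hmg : MonotoneOn (fun t => f t - t) (Set.Icc (0:ℝ) 1) := by
      apply monotoneOn_of_deriv_nonneg (convex_Icc 0 1)
        (hcont.sub continuousOn_id)
      · intro x hx
        rw [interior_Icc] at hx
        exact ((hf x (hsub ⟨hx.1.le, hx.2.le⟩)).sub (hasDerivAt_id x)).differentiableAt.differentiableWithinAt
      · intro x hx
        rw [interior_Icc] at hx
        have hd : HasDerivAt (fun t => f t - t) (Real.sqrt (1 + f x ^ 4) - 1) x :=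
          (hf x (hsub ⟨hx.1.le, hx.2.le⟩)).sub (hasDerivAt_id x)
        show 0 ≤ deriv (fun t => f t - t) x
        rw [hd.deriv]
        have h1 : (1:ℝ) ≤ Real.sqrt (1 + f x ^ 4) := by
          nlinarith [Real.sq_sqrt (show (0:ℝ) ≤ 1 + f x ^ 4 by positivity),
            Real.sqrt_nonneg (1 + f x ^ 4), sq_nonneg (f x ^ 2)]
        linarith
    intro t ht
    have := hmg ⟨le_refl 0, by norm_num⟩ ht ht.1
    simp only [hf0, zero_sub, sub_zero] at this
    linarith
  have hf1 : 1 < f 1 := by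
    have hstrict : StrictMonoOn (fun t => f t - t) (Set.Icc (1/2:ℝ) 1) := by
      apply strictMonoOn_of_deriv_pos (convex_Icc _ _)
      · exact (hcont.sub continuousOn_id).mono (Set.Icc_subset_Icc (by norm_num) le_rfl)
      · intro x hx
        rw [interior_Icc] at hx
        have hxI : x ∈ Set.Icc (0:ℝ) 1 := ⟨by linarith [hx.1], hx.2.le⟩
        have hd : HasDerivAt (fun t => f t - t) (Real.sqrt (1 + f x ^ 4) - 1) x :=
          (hf x (hsub hxI)).sub (hasDerivAt_id x)
        rw [hd.deriv]
        have hfx : (1/2:ℝ) ≤ f x := le_trans (by linarith [hx.1]) (hg x hxI)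
        have h1 : (1:ℝ) < Real.sqrt (1 + f x ^ 4) := by
          nlinarith [Real.sq_sqrt (show (0:ℝ) ≤ 1 + f x ^ 4 by positivity),
            Real.sqrt_nonneg (1 + f x ^ 4),
            pow_le_pow_left₀ (by norm_num : (0:ℝ) ≤ 1/2) hfx 4]
        linarith
    have hlt := hstrict ⟨le_refl _, by norm_num⟩ ⟨by norm_num, le_refl _⟩ (by norm_num)
    have h12 : (1/2:ℝ) ≤ f (1/2) := hg _ ⟨by norm_num, by norm_num⟩
    simp only at hlt
    linarith
  obtain ⟨K, hK, hfK⟩ : ∃ K ∈ Set.Ioo (0:ℝ) 1, f K = 1 := by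
    have hmem : (1:ℝ) ∈ Set.Ioo (f 0) (f 1) := by rw [hf0]; exact ⟨one_pos, hf1⟩
    have := intermediate_value_Ioo (by norm_num : (0:ℝ) ≤ 1) hcont hmem
    obtain ⟨K, hK, hfK⟩ := this
    exact ⟨K, hK, hfK⟩
  refine ⟨K, ⟨hK, hfK⟩, ?_⟩
  rintro K' ⟨hK', hfK'⟩
  exact hmono.injOn ⟨hK'.1.le, hK'.2.le⟩ ⟨hK.1.le, hK.2.le⟩ (by rw [hfK, hfK'])
end

section
/- ∫₀¹ dσ/(1-σ⁴)^(1/2) = √2 · ∫₀¹ dτ/(1+τ⁴)^(1/2); that is, L = √2·K where K = ∫₀¹ (1+τ⁴)^(-1/2) dτ and L = ∫₀¹ (1-σ⁴)^(-1/2) dσ. -/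
open Set MeasureTheory intervalIntegral

noncomputable def fSub (x : ℝ) : ℝ := Real.sqrt 2 * x / Real.sqrt (1 + x ^ 4)

noncomputable def fSub' (x : ℝ) : ℝ :=
  Real.sqrt 2 * (1 - x ^ 4) / ((1 + x ^ 4) * Real.sqrt (1 + x ^ 4))

lemma one_add_pos (x : ℝ) : (0:ℝ) < 1 + x ^ 4 := by positivity

lemma sqrt_one_add_pos (x : ℝ) : 0 < Real.sqrt (1 + x ^ 4) :=
  Real.sqrt_pos.mpr (one_add_pos x)

lemma fSub_hasDerivAt (x : ℝ) : HasDerivAt fSub (fSub' x) x := by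
  have h1 : HasDerivAt (fun x : ℝ => 1 + x ^ 4) (4 * x ^ 3) x := by
    simpa using ((hasDerivAt_pow 4 x).const_add 1)
  have hs : HasDerivAt (fun x : ℝ => Real.sqrt (1 + x ^ 4))
      (4 * x ^ 3 / (2 * Real.sqrt (1 + x ^ 4))) x :=
    h1.sqrt (ne_of_gt (one_add_pos x))
  have hn : HasDerivAt (fun x : ℝ => Real.sqrt 2 * x) (Real.sqrt 2) x := by
    simpa using (hasDerivAt_id x).const_mul (Real.sqrt 2)
  have hd := hn.div hs (ne_of_gt (sqrt_one_add_pos x))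
  refine HasDerivAt.congr_deriv hd (Eq.symm ?_)
  have hsp := sqrt_one_add_pos x
  have hsq : Real.sqrt (1 + x ^ 4) ^ 2 = 1 + x ^ 4 := Real.sq_sqrt (one_add_pos x).le
  rw [fSub']
  field_simp
  linear_combination (-4*x^4) * hsq

lemma sq_sqrt' (x : ℝ) : Real.sqrt (1 + x ^ 4) ^ 2 = 1 + x ^ 4 :=
  Real.sq_sqrt (one_add_pos x).le

lemma fSub_zero : fSub 0 = 0 := by simp [fSub]

lemma fSub_one : fSub 1 = 1 := by
  have : (1:ℝ) + 1 ^ 4 = 2 := by norm_num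
  rw [fSub, this, mul_one, div_self (Real.sqrt_ne_zero'.mpr (by norm_num))]

lemma fSub_mem_Icc {x : ℝ} (hx : x ∈ Icc (0:ℝ) 1) : fSub x ∈ Icc (0:ℝ) 1 := by
  obtain ⟨h0, h1⟩ := hx
  constructor
  · exact div_nonneg (by positivity) (sqrt_one_add_pos x).le
  · rw [fSub, div_le_one (sqrt_one_add_pos x)]
    rw [show Real.sqrt 2 * x = Real.sqrt (2 * x ^ 2) by
      rw [Real.sqrt_mul (by norm_num), Real.sqrt_sq h0]]
    exact Real.sqrt_le_sqrt (by nlinarith [sq_nonneg (1 - x ^ 2)])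

lemma fSub_mem_Ioo {x : ℝ} (hx : x ∈ Ioo (0:ℝ) 1) : fSub x ∈ Ioo (0:ℝ) 1 := by
  obtain ⟨h0, h1⟩ := hx
  constructor
  · exact div_pos (by positivity) (sqrt_one_add_pos x)
  · rw [fSub, div_lt_one (sqrt_one_add_pos x)]
    rw [show Real.sqrt 2 * x = Real.sqrt (2 * x ^ 2) by
      rw [Real.sqrt_mul (by norm_num), Real.sqrt_sq h0.le]]
    have hx2 : x ^ 2 < 1 := by nlinarith
    exact Real.sqrt_lt_sqrt (by positivity)
      (by nlinarith [mul_pos (sub_pos.mpr hx2) (sub_pos.mpr hx2)])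

lemma key_eq {x : ℝ} (hx : x ∈ Ico (0:ℝ) 1) :
    fSub' x * (1 / Real.sqrt (1 - fSub x ^ 4)) =
      Real.sqrt 2 * (1 / Real.sqrt (1 + x ^ 4)) := by
  obtain ⟨h0, h1⟩ := hx
  have hx4 : x ^ 4 < 1 := pow_lt_one₀ h0 h1 (by norm_num)
  have hs := sqrt_one_add_pos x
  have hsq := sq_sqrt' x
  have h4 : 1 - fSub x ^ 4 = ((1 - x ^ 4) / (1 + x ^ 4)) ^ 2 := by
    rw [fSub, div_pow, mul_pow]
    have hs4 : Real.sqrt (1 + x ^ 4) ^ 4 = (1 + x ^ 4) ^ 2 := by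
      rw [show (4:ℕ) = 2 * 2 from rfl, pow_mul, hsq]
    rw [hs4, show Real.sqrt 2 ^ 4 = 4 by
      rw [show (4:ℕ) = 2 * 2 from rfl, pow_mul, Real.sq_sqrt (by norm_num : (0:ℝ) ≤ 2)]; norm_num]
    field_simp
    ring
  have h14 : (1:ℝ) - x ^ 4 ≠ 0 := by linarith
  rw [h4, Real.sqrt_sq (div_nonneg (by linarith) (one_add_pos x).le), fSub']
  field_simp

lemma g_contOn : ContinuousOn (fun σ : ℝ => 1 / Real.sqrt (1 - σ ^ 4)) (Ioo (0:ℝ) 1) := by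
  apply ContinuousOn.div continuousOn_const
  · exact (Real.continuous_sqrt.comp (by continuity)).continuousOn
  · intro σ hσ
    have h4 : σ ^ 4 < 1 := pow_lt_one₀ hσ.1.le hσ.2 (by norm_num)
    exact ne_of_gt (Real.sqrt_pos.mpr (by linarith))

lemma g_integrable : IntegrableOn (fun σ : ℝ => 1 / Real.sqrt (1 - σ ^ 4)) (Icc (0:ℝ) 1) := by
  rw [integrableOn_Icc_iff_integrableOn_Ioo]
  have hmaj : IntegrableOn (fun x : ℝ => (1 - x) ^ (-(1/2) : ℝ)) (Ioo (0:ℝ) 1) := by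
    have h : IntervalIntegrable (fun x : ℝ => x ^ (-(1/2) : ℝ)) volume 0 1 :=
      intervalIntegrable_rpow' (by norm_num)
    have h2 := (h.comp_sub_left 1).symm
    simp only [sub_zero, sub_self] at h2
    rwa [intervalIntegrable_iff_integrableOn_Ioo_of_le (by norm_num)] at h2
  apply hmaj.mono'
  · have hm : Measurable fun σ : ℝ => (Real.sqrt (1 - σ ^ 4))⁻¹ :=
      (Real.continuous_sqrt.comp (by continuity)).measurable.inv
    simpa [one_div] using hm.aestronglyMeasurable
  · rw [ae_restrict_iff' measurableSet_Ioo]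
    filter_upwards with x hx
    obtain ⟨h0, h1⟩ := hx
    have hle : 1 - x ≤ 1 - x ^ 4 := by nlinarith [pow_le_one₀ h0.le h1.le (n := 3), h0.le]
    have hxp : (0:ℝ) < 1 - x := by linarith
    have hsp : 0 < Real.sqrt (1 - x) := Real.sqrt_pos.mpr hxp
    have heq : (1 - x) ^ (-(1/2) : ℝ) = 1 / Real.sqrt (1 - x) := by
      rw [Real.rpow_neg hxp.le, ← Real.sqrt_eq_rpow, one_div]
    rw [heq, Real.norm_eq_abs, abs_of_nonneg (by positivity)]
    exact one_div_le_one_div_of_le hsp (Real.sqrt_le_sqrt hle)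

theorem L_eq_sqrt_two_mul_K :
    (∫ σ in (0 : ℝ)..1, 1 / Real.sqrt (1 - σ ^ 4)) =
      Real.sqrt 2 * ∫ τ in (0 : ℝ)..1, 1 / Real.sqrt (1 + τ ^ 4) := by
  have h01 : (0:ℝ) ≤ 1 := by norm_num
  have hf : ContinuousOn fSub (uIcc (0:ℝ) 1) := fun x _ =>
    (fSub_hasDerivAt x).continuousAt.continuousWithinAt
  have hff' : ∀ x ∈ Ioo (min (0:ℝ) 1) (max (0:ℝ) 1),
      HasDerivWithinAt fSub (fSub' x) (Ioi x) x := fun x _ =>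
    (fSub_hasDerivAt x).hasDerivWithinAt
  have himg : fSub '' Ioo (min (0:ℝ) 1) (max (0:ℝ) 1) ⊆ Ioo 0 1 := by
    rw [min_eq_left h01, max_eq_right h01]
    rintro _ ⟨x, hx, rfl⟩
    exact fSub_mem_Ioo hx
  have hg_cont : ContinuousOn (fun σ : ℝ => 1 / Real.sqrt (1 - σ ^ 4))
      (fSub '' Ioo (min (0:ℝ) 1) (max (0:ℝ) 1)) := g_contOn.mono himg
  have hg1 : IntegrableOn (fun σ : ℝ => 1 / Real.sqrt (1 - σ ^ 4))
      (fSub '' uIcc (0:ℝ) 1) := by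
    apply g_integrable.mono_set
    rintro _ ⟨x, hx, rfl⟩
    rw [uIcc_of_le h01] at hx
    exact fSub_mem_Icc hx
  have hg2 : IntegrableOn
      (fun x => fSub' x • ((fun σ : ℝ => 1 / Real.sqrt (1 - σ ^ 4)) ∘ fSub) x)
      (uIcc (0:ℝ) 1) := by
    rw [uIcc_of_le h01, integrableOn_Icc_iff_integrableOn_Ioo]
    have hcont : Continuous fun x : ℝ => Real.sqrt 2 * (1 / Real.sqrt (1 + x ^ 4)) := by
      apply continuous_const.mul
      exact Continuous.div continuous_const
        (Real.continuous_sqrt.comp (by continuity)) fun x => (sqrt_one_add_pos x).ne'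
    apply ((hcont.integrableOn_Icc (a := 0) (b := 1)).mono_set Ioo_subset_Icc_self).congr_fun
      ?_ measurableSet_Ioo
    intro x hx
    simpa [smul_eq_mul, Function.comp] using (key_eq ⟨hx.1.le, hx.2⟩).symm
  have key := integral_comp_smul_deriv''' hf hff' hg_cont hg1 hg2
  rw [fSub_zero, fSub_one] at key
  rw [← key, ← intervalIntegral.integral_const_mul]
  apply intervalIntegral.integral_congr_ae
  have h1 : ∀ᵐ x : ℝ, x ≠ 1 := by
    rw [ae_iff]
    simpa using measure_singleton (1:ℝ)
  filter_upwards [h1] with x hx1 hxI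
  rw [uIoc_of_le h01] at hxI
  have hx : x ∈ Ico (0:ℝ) 1 := ⟨hxI.1.le, lt_of_le_of_ne hxI.2 hx1⟩
  simpa [smul_eq_mul, Function.comp] using key_eq hx
end

section
/- Let s be a meromorphic function with (s')² = 1 - s⁴, and define ℘(z) = λ²/s(λz)² where λ = (1+i)/2. Then wherever defined, (℘')² = 4℘³ + ℘; i.e., ℘ satisfies the Weierstrass differential equation with invariants g₂ = -1, g₃ = 0. -/
theorem weierstrass_pseudolemniscatic
    (U : Set ℂ) (hU : IsOpen U)
    (s s' s'' : ℂ → ℂ)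
    (hs : ∀ z ∈ U, HasDerivAt s (s' z) z)
    (hs' : ∀ z ∈ U, HasDerivAt s' (s'' z) z)
    (hsq : ∀ z ∈ U, s' z ^ 2 = 1 - s z ^ 4)
    (hsecond : ∀ z ∈ U, s'' z = -2 * s z ^ 3) :
    ∀ z : ℂ, ((1 + Complex.I) / 2) * z ∈ U → s (((1 + Complex.I) / 2) * z) ≠ 0 →
      (deriv (fun w => ((1 + Complex.I) / 2) ^ 2 / s (((1 + Complex.I) / 2) * w) ^ 2) z) ^ 2 =
        4 * (((1 + Complex.I) / 2) ^ 2 / s (((1 + Complex.I) / 2) * z) ^ 2) ^ 3 +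
          ((1 + Complex.I) / 2) ^ 2 / s (((1 + Complex.I) / 2) * z) ^ 2 := by
  intro z hz hne
  set l : ℂ := (1 + Complex.I) / 2 with hl
  have h1 : HasDerivAt (fun w => l * w) l z := by
    simpa using (hasDerivAt_id z).const_mul l
  have h2 : HasDerivAt (fun w => s (l * w)) (s' (l * z) * l) z :=
    (hs _ hz).comp z h1
  have h3 : HasDerivAt (fun w => s (l * w) ^ 2)
      (2 * s (l * z) * (s' (l * z) * l)) z := by
    have := h2.fun_pow 2
    simpa [mul_comm, mul_assoc] using this
  have hne2 : s (l * z) ^ 2 ≠ 0 := pow_ne_zero _ hne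
  have h4 : HasDerivAt (fun w => l ^ 2 / s (l * w) ^ 2)
      ((0 * s (l * z) ^ 2 - l ^ 2 * (2 * s (l * z) * (s' (l * z) * l))) /
        (s (l * z) ^ 2) ^ 2) z :=
    (hasDerivAt_const z (l ^ 2)).div h3 hne2
  rw [h4.deriv]
  have hq := hsq _ hz
  have hl4 : l ^ 4 = -(1 / 4) := by
    rw [hl]
    linear_combination ((Complex.I ^ 2 + 4 * Complex.I + 5) / 16) * Complex.I_sq
  clear_value l
  field_simp
  ring_nf
  linear_combination (4 * l ^ 6) * hq - (4 * l ^ 2 * s (l * z) ^ 4) * hl4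
end
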